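/- Let K ∈ ℝ and θ > 0, and if K > 0 assume Kθ² < π². Define σ_{K,1}^{(t)}(θ) := sin(tθ√K)/sin(θ√K) if K > 0, σ_{K,1}^{(t)}(θ) := t if K = 0, and σ_{K,1}^{(t)}(θ) := sinh(tθ√(−K))/sinh(θ√(−K)) if K < 0. Let u : [0,1] → (0,∞) be continuous on [0,1], twice differentiable on (0,1), and satisfy u''(t) + Kθ²·u(t) ≤ 0 for all t ∈ (0,1). Then for every t ∈ [0,1], u(t) ≥ σ_{K,1}^{(1−t)}(θ)·u(0) + σ_{K,1}^{(t)}(θ)·u(1). -/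

import Mathlib

open Set


lemma sturm_core (lam : ℝ) (φ φ' φ'' w w' w'' : ℝ → ℝ)
    (hφpos : ∀ t ∈ Icc (0:ℝ) 1, 0 < φ t)
    (hφd : ∀ t, HasDerivAt φ (φ' t) t)
    (hφd' : ∀ t, HasDerivAt φ' (φ'' t) t)
    (hφeq : ∀ t, φ'' t = -lam * φ t)
    (hwc : ContinuousOn w (Icc 0 1))
    (hwd : ∀ t ∈ Ioo (0:ℝ) 1, HasDerivAt w (w' t) t)
    (hwd' : ∀ t ∈ Ioo (0:ℝ) 1, HasDerivAt w' (w'' t) t)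
    (hwineq : ∀ t ∈ Ioo (0:ℝ) 1, w'' t ≤ -lam * w t)
    (hw0 : 0 ≤ w 0) (hw1 : 0 ≤ w 1) :
    ∀ t ∈ Icc (0:ℝ) 1, 0 ≤ w t := by
  have hφc : Continuous φ := continuous_iff_continuousAt.2 fun t => (hφd t).continuousAt
  have hφ'c : Continuous φ' := continuous_iff_continuousAt.2 fun t => (hφd' t).continuousAt
  -- the Wronskian
  set W : ℝ → ℝ := fun t => w' t * φ t - w t * φ' t with hW
  have hWd : ∀ t ∈ Ioo (0:ℝ) 1, HasDerivAt W (w'' t * φ t - w t * φ'' t) t := by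
    intro t ht
    have h := (((hwd' t ht).mul (hφd t)).sub ((hwd t ht).mul (hφd' t)))
    refine h.congr_deriv ?_
    ring
  -- W is antitone on `Ioo 0 1`
  have hWanti : AntitoneOn W (Ioo 0 1) := by
    apply antitoneOn_of_deriv_nonpos (convex_Ioo (0:ℝ) 1)
    · exact fun t ht => ((hWd t ht).continuousAt).continuousWithinAt
    · rw [interior_Ioo]
      exact fun t ht => ((hWd t ht).differentiableAt).differentiableWithinAt
    · rw [interior_Ioo]
      intro t ht
      rw [(hWd t ht).deriv]
      have h1 : w'' t * φ t ≤ (-lam * w t) * φ t :=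
        mul_le_mul_of_nonneg_right (hwineq t ht) (hφpos t (Ioo_subset_Icc_self ht)).le
      have h2 : w t * φ'' t = -lam * w t * φ t := by rw [hφeq t]; ring
      linarith
  -- the quotient g = w / φ
  set g : ℝ → ℝ := fun t => w t / φ t with hg
  have hgc : ContinuousOn g (Icc 0 1) :=
    hwc.div (hφc.continuousOn) (fun t ht => (hφpos t ht).ne')
  have hgd : ∀ t ∈ Ioo (0:ℝ) 1, HasDerivAt g (W t / (φ t)^2) t := by
    intro t ht
    exact (hwd t ht).div (hφd t) (hφpos t (Ioo_subset_Icc_self ht)).ne'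
  -- by contradiction
  intro t₀ ht₀
  by_contra hneg
  push_neg at hneg
  have ht₀0 : (0:ℝ) < t₀ := by
    rcases lt_or_eq_of_le ht₀.1 with h | h
    · exact h
    · exact absurd (h ▸ hw0) (not_le.2 hneg)
  have ht₀1 : t₀ < 1 := by
    rcases lt_or_eq_of_le ht₀.2 with h | h
    · exact h
    · exact absurd (h ▸ hw1) (not_le.2 hneg)
  have hgneg : g t₀ < 0 := div_neg_of_neg_of_pos hneg (hφpos t₀ ht₀)
  have hg0 : 0 ≤ g 0 := div_nonneg hw0 (hφpos 0 (by norm_num)).le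
  have hg1 : 0 ≤ g 1 := div_nonneg hw1 (hφpos 1 (by norm_num)).le
  -- MVT on [0, t₀]
  obtain ⟨a, ha, hga⟩ := exists_hasDerivAt_eq_slope g (fun t => W t / (φ t)^2) ht₀0
    (hgc.mono (Icc_subset_Icc le_rfl ht₀.2))
    (fun x hx => hgd x ⟨hx.1, hx.2.trans ht₀1⟩)
  -- MVT on [t₀, 1]
  obtain ⟨b, hb, hgb⟩ := exists_hasDerivAt_eq_slope g (fun t => W t / (φ t)^2) ht₀1
    (hgc.mono (Icc_subset_Icc ht₀.1 le_rfl))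
    (fun x hx => hgd x ⟨ht₀0.trans hx.1, hx.2⟩)
  have haI : a ∈ Ioo (0:ℝ) 1 := ⟨ha.1, ha.2.trans ht₀1⟩
  have hbI : b ∈ Ioo (0:ℝ) 1 := ⟨ht₀0.trans hb.1, hb.2⟩
  have hWa : W a < 0 := by
    have : W a / (φ a)^2 < 0 := by
      rw [hga]
      apply div_neg_of_neg_of_pos <;> linarith
    rcases div_neg_iff.1 this with ⟨_, h⟩ | ⟨h, _⟩
    · exact absurd h (not_lt.2 (sq_nonneg _))
    · exact h
  have hWb : 0 < W b := by
    have : 0 < W b / (φ b)^2 := by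
      rw [hgb]
      apply div_pos <;> linarith
    rcases div_pos_iff.1 this with ⟨h, _⟩ | ⟨_, h⟩
    · exact h
    · exact absurd h (not_lt.2 (sq_nonneg _))
  have := hWanti haI hbI (le_of_lt (ha.2.trans hb.1))
  linarith

lemma sturm_apply (lam : ℝ) (φ φ' φ'' v v' u u' u'' : ℝ → ℝ)
    (hφpos : ∀ t ∈ Icc (0:ℝ) 1, 0 < φ t)
    (hφd : ∀ t, HasDerivAt φ (φ' t) t)
    (hφd' : ∀ t, HasDerivAt φ' (φ'' t) t)
    (hφeq : ∀ t, φ'' t = -lam * φ t)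
    (hvd : ∀ t, HasDerivAt v (v' t) t)
    (hvd' : ∀ t, HasDerivAt v' (-lam * v t) t)
    (huc : ContinuousOn u (Icc 0 1))
    (hud : ∀ t ∈ Ioo (0:ℝ) 1, HasDerivAt u (u' t) t)
    (hud' : ∀ t ∈ Ioo (0:ℝ) 1, HasDerivAt u' (u'' t) t)
    (hineq : ∀ t ∈ Ioo (0:ℝ) 1, u'' t + lam * u t ≤ 0)
    (hv0 : v 0 ≤ u 0) (hv1 : v 1 ≤ u 1) :
    ∀ t ∈ Icc (0:ℝ) 1, v t ≤ u t := by
  have hvc : Continuous v := continuous_iff_continuousAt.2 fun t => (hvd t).continuousAt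
  have key := sturm_core lam φ φ' φ'' (fun t => u t - v t) (fun t => u' t - v' t)
    (fun t => u'' t - (-lam * v t)) hφpos hφd hφd' hφeq
    (huc.sub hvc.continuousOn)
    (fun t ht => (hud t ht).sub (hvd t))
    (fun t ht => (hud' t ht).sub (hvd' t))
    (fun t ht => by have := hineq t ht; ring_nf; nlinarith)
    (by simpa using hv0) (by simpa using hv1)
  intro t ht
  have := key t ht
  simpa using this

/-- **Comparison principle for `u'' + Kθ²·u ≤ 0` with the constant-curvature distortion
coefficients.** Let `K ∈ ℝ`, `θ > 0`, with `Kθ² < π²` whenever `K > 0`, and let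
`σ_{K,1}^{(t)}(θ)` be `sin(tθ√K)/sin(θ√K)` for `K > 0`, `t` for `K = 0`, and
`sinh(tθ√(−K))/sinh(θ√(−K))` for `K < 0`. If `u : [0,1] → (0,∞)` is continuous on `[0,1]`,
twice differentiable on `(0,1)` with `u'' + Kθ²·u ≤ 0`, then
`u(t) ≥ σ_{K,1}^{(1−t)}(θ)·u(0) + σ_{K,1}^{(t)}(θ)·u(1)` for every `t ∈ [0,1]`. -/
theorem comparison_concavity_sigma (K θ : ℝ) (hθ : 0 < θ)
    (hKθ : 0 < K → K * θ ^ 2 < Real.pi ^ 2)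
    (σ : ℝ → ℝ)
    (hσ : ∀ t, σ t =
      if 0 < K then Real.sin (t * θ * Real.sqrt K) / Real.sin (θ * Real.sqrt K)
      else if K = 0 then t
      else Real.sinh (t * θ * Real.sqrt (-K)) / Real.sinh (θ * Real.sqrt (-K)))
    (u u' u'' : ℝ → ℝ)
    (hupos : ∀ t ∈ Icc (0:ℝ) 1, 0 < u t)
    (huc : ContinuousOn u (Icc 0 1))
    (hu : ∀ t ∈ Ioo (0:ℝ) 1, HasDerivAt u (u' t) t)
    (hu' : ∀ t ∈ Ioo (0:ℝ) 1, HasDerivAt u' (u'' t) t)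
    (hineq : ∀ t ∈ Ioo (0:ℝ) 1, u'' t + K * θ ^ 2 * u t ≤ 0) :
    ∀ t ∈ Icc (0:ℝ) 1, σ (1 - t) * u 0 + σ t * u 1 ≤ u t := by
  have hineq' : ∀ t ∈ Ioo (0:ℝ) 1, u'' t + (K * θ ^ 2) * u t ≤ 0 := hineq
  rcases lt_trichotomy K 0 with hK | hK | hK
  · -- K < 0
    set s : ℝ := θ * Real.sqrt (-K) with hsdef
    have hs : 0 < s := mul_pos hθ (Real.sqrt_pos.2 (by linarith))
    have hs2 : s ^ 2 = -(K * θ ^ 2) := by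
      rw [hsdef, mul_pow, Real.sq_sqrt (by linarith : (0:ℝ) ≤ -K)]; ring
    have hsinh : 0 < Real.sinh s := Real.sinh_pos_iff.2 hs
    have h1 : ∀ t : ℝ, HasDerivAt (fun x : ℝ => (1 - x) * s) (-s) t := by
      intro t
      simpa using ((hasDerivAt_id t).const_sub (1:ℝ)).mul_const s
    have h2 : ∀ t : ℝ, HasDerivAt (fun x : ℝ => x * s) s t := by
      intro t; simpa using (hasDerivAt_id t).mul_const s
    have h3 : ∀ t : ℝ, HasDerivAt (fun x : ℝ => s * (x - 1/2)) s t := by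
      intro t; simpa using ((hasDerivAt_id t).sub_const (1/2 : ℝ)).const_mul s
    have key := sturm_apply (K * θ ^ 2)
      (fun t => Real.cosh (s * (t - 1/2)))
      (fun t => Real.sinh (s * (t - 1/2)) * s)
      (fun t => Real.cosh (s * (t - 1/2)) * s * s)
      (fun t => (Real.sinh ((1 - t) * s) * u 0 + Real.sinh (t * s) * u 1) / Real.sinh s)
      (fun t => (Real.cosh ((1 - t) * s) * -s * u 0 + Real.cosh (t * s) * s * u 1) / Real.sinh s)
      u u' u''
      (fun t _ => Real.cosh_pos _)
      (fun t => (h3 t).cosh)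
      (fun t => (h3 t).sinh.mul_const s)
      (fun t => by rw [show -(K * θ ^ 2) = s ^ 2 by rw [hs2]]; ring)
      (fun t => (((h1 t).sinh.mul_const (u 0)).add ((h2 t).sinh.mul_const (u 1))).div_const _)
      (fun t => by
        have hb := ((((h1 t).cosh.mul_const (-s)).mul_const (u 0)).add
          (((h2 t).cosh.mul_const s).mul_const (u 1))).div_const (Real.sinh s)
        refine hb.congr_deriv ?_
        rw [show -(K * θ ^ 2) = s ^ 2 by rw [hs2]]
        ring)
      huc hu hu' hineq'
      (by
        norm_num
        rw [mul_comm, mul_div_assoc, div_self hsinh.ne', mul_one])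
      (by
        norm_num
        rw [mul_comm, mul_div_assoc, div_self hsinh.ne', mul_one])
    intro t ht
    have hmatch : ∀ x : ℝ, σ x = Real.sinh (x * s) / Real.sinh s := by
      intro x
      rw [hσ, if_neg (by linarith), if_neg (by linarith), hsdef, mul_assoc]
    have heq : σ (1 - t) * u 0 + σ t * u 1
        = (Real.sinh ((1 - t) * s) * u 0 + Real.sinh (t * s) * u 1) / Real.sinh s := by
      rw [hmatch, hmatch]; ring
    rw [heq]; exact key t ht
  · -- K = 0
    subst hK
    have key := sturm_apply ((0:ℝ) * θ ^ 2)
      (fun _ => (1:ℝ)) (fun _ => (0:ℝ)) (fun _ => (0:ℝ))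
      (fun t => (1 - t) * u 0 + t * u 1)
      (fun _ => -u 0 + u 1)
      u u' u''
      (fun t _ => one_pos)
      (fun t => hasDerivAt_const t 1)
      (fun t => hasDerivAt_const t 0)
      (fun t => by norm_num)
      (fun t => by
        have hb := (((hasDerivAt_id t).const_sub (1:ℝ)).mul_const (u 0)).add
          ((hasDerivAt_id t).mul_const (u 1))
        refine hb.congr_deriv ?_
        ring)
      (fun t => by
        have hb := hasDerivAt_const t (-u 0 + u 1)
        refine hb.congr_deriv ?_
        ring)
      huc hu hu' hineq'
      (by norm_num) (by norm_num)
    intro t ht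
    have heq : σ (1 - t) * u 0 + σ t * u 1 = (1 - t) * u 0 + t * u 1 := by
      rw [hσ, hσ, if_neg (lt_irrefl 0), if_pos rfl, if_neg (lt_irrefl 0), if_pos rfl]
    rw [heq]; exact key t ht
  · -- K > 0
    set s : ℝ := θ * Real.sqrt K with hsdef
    have hs : 0 < s := mul_pos hθ (Real.sqrt_pos.2 hK)
    have hs2 : s ^ 2 = K * θ ^ 2 := by
      rw [hsdef, mul_pow, Real.sq_sqrt hK.le]; ring
    have hsπ : s < Real.pi := by
      nlinarith [hKθ hK, Real.pi_pos]
    have hsin : 0 < Real.sin s := Real.sin_pos_of_pos_of_lt_pi hs hsπ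
    have h1 : ∀ t : ℝ, HasDerivAt (fun x : ℝ => (1 - x) * s) (-s) t := by
      intro t
      simpa using ((hasDerivAt_id t).const_sub (1:ℝ)).mul_const s
    have h2 : ∀ t : ℝ, HasDerivAt (fun x : ℝ => x * s) s t := by
      intro t; simpa using (hasDerivAt_id t).mul_const s
    have h3 : ∀ t : ℝ, HasDerivAt (fun x : ℝ => s * (x - 1/2)) s t := by
      intro t; simpa using ((hasDerivAt_id t).sub_const (1/2 : ℝ)).const_mul s
    have key := sturm_apply (K * θ ^ 2)
      (fun t => Real.cos (s * (t - 1/2)))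
      (fun t => -Real.sin (s * (t - 1/2)) * s)
      (fun t => -(Real.cos (s * (t - 1/2)) * s) * s)
      (fun t => (Real.sin ((1 - t) * s) * u 0 + Real.sin (t * s) * u 1) / Real.sin s)
      (fun t => (Real.cos ((1 - t) * s) * -s * u 0 + Real.cos (t * s) * s * u 1) / Real.sin s)
      u u' u''
      (fun t ht => by
        apply Real.cos_pos_of_mem_Ioo
        constructor
        · have := ht.1
          nlinarith [mul_nonneg hs.le ht.1]
        · nlinarith [mul_nonneg hs.le (sub_nonneg.2 ht.2)])
      (fun t => (h3 t).cos)
      (fun t => ((h3 t).sin.neg).mul_const s)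
      (fun t => by rw [← hs2]; ring)
      (fun t => (((h1 t).sin.mul_const (u 0)).add ((h2 t).sin.mul_const (u 1))).div_const _)
      (fun t => by
        have hb := ((((h1 t).cos.mul_const (-s)).mul_const (u 0)).add
          (((h2 t).cos.mul_const s).mul_const (u 1))).div_const (Real.sin s)
        refine hb.congr_deriv ?_
        rw [← hs2]
        ring)
      huc hu hu' hineq'
      (by
        norm_num
        rw [mul_comm, mul_div_assoc, div_self hsin.ne', mul_one])
      (by
        norm_num
        rw [mul_comm, mul_div_assoc, div_self hsin.ne', mul_one])
    intro t ht
    have hmatch : ∀ x : ℝ, σ x = Real.sin (x * s) / Real.sin s := by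
      intro x
      rw [hσ, if_pos hK, hsdef, mul_assoc]
    have heq : σ (1 - t) * u 0 + σ t * u 1
        = (Real.sin ((1 - t) * s) * u 0 + Real.sin (t * s) * u 1) / Real.sin s := by
      rw [hmatch, hmatch]; ring
    rw [heq]; exact key t ht
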